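/- With the notation of the context: if λ₂·α ≤ (λ₁+1)/(λ₁−1), then Φ(1) ∈ (0, π]; and if λ₂·α > (λ₁+1)/(λ₁−1), then Φ(1) ∈ (π, 2π). (This is Lemma 2.10: for lifts A, B of the hyperbolic element τ_{∞,0}(λ₁) and the parabolic element π_α(λ₂) to the m-fold covering group of PSL(2,ℝ), lev_m(A·B) − lev_m(A) − lev_m(B) equals 0 if λ₂α ≤ (λ₁+1)/(λ₁−1) and equals 1 otherwise.) -/

import Mathlib

/-- `λ₁(t) = 1 + t(λ₁−1)`, deforming the shift parameter from `1` to `λ₁`. -/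
noncomputable def lamt (l t : ℝ) : ℝ := 1 + t * (l - 1)

/-- The hyperbolic element `τ_{∞,0}(λ₁(t))` of `SL(2,ℝ)` as a matrix. -/
noncomputable def matA (l1 t : ℝ) : Matrix (Fin 2) (Fin 2) ℝ :=
  !![Real.sqrt (lamt l1 t), 0; 0, (Real.sqrt (lamt l1 t))⁻¹]

/-- The parabolic element `π_α(t·λ₂)` of `SL(2,ℝ)` with fixed point `α`. -/
noncomputable def matB (l2 α t : ℝ) : Matrix (Fin 2) (Fin 2) ℝ :=
  !![1 - t * l2 * α, t * l2 * α ^ 2; -(t * l2), 1 + t * l2 * α]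

/-- The product path `M(t) = A(t)·B(t)`. -/
noncomputable def matM (l1 l2 α t : ℝ) : Matrix (Fin 2) (Fin 2) ℝ :=
  matA l1 t * matB l2 α t

/-- `w(t) = (a(t)+d(t)) + i(b(t)−c(t))`. -/
noncomputable def wfun (l1 l2 α t : ℝ) : ℂ :=
  ((matM l1 l2 α t 0 0 + matM l1 l2 α t 1 1 : ℝ) : ℂ) +
    Complex.I * ((matM l1 l2 α t 0 1 - matM l1 l2 α t 1 0 : ℝ) : ℂ)

lemma sum_entries (l1 l2 α t : ℝ) :
    matM l1 l2 α t 0 0 + matM l1 l2 α t 1 1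
      = Real.sqrt (lamt l1 t) * (1 - t*l2*α) + (Real.sqrt (lamt l1 t))⁻¹ * (1 + t*l2*α) := by
  simp [matM, matA, matB, Matrix.mul_apply, Fin.sum_univ_two]

lemma diff_entries (l1 l2 α t : ℝ) :
    matM l1 l2 α t 0 1 - matM l1 l2 α t 1 0
      = t * l2 * (Real.sqrt (lamt l1 t) * α^2 + (Real.sqrt (lamt l1 t))⁻¹) := by
  simp [matM, matA, matB, Matrix.mul_apply, Fin.sum_univ_two]
  ring

lemma wfun_re (l1 l2 α t : ℝ) :
    (wfun l1 l2 α t).re = Real.sqrt (lamt l1 t) * (1 - t*l2*α)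
      + (Real.sqrt (lamt l1 t))⁻¹ * (1 + t*l2*α) := by
  rw [wfun, ← sum_entries]; simp

lemma wfun_im (l1 l2 α t : ℝ) :
    (wfun l1 l2 α t).im = t * l2 * (Real.sqrt (lamt l1 t) * α^2
      + (Real.sqrt (lamt l1 t))⁻¹) := by
  rw [wfun, ← diff_entries]; simp

lemma sqrt_lamt_ge_one {l1 t : ℝ} (hl1 : 1 < l1) (ht : t ∈ Set.Icc (0:ℝ) 1) :
    1 ≤ Real.sqrt (lamt l1 t) := by
  rw [show (1:ℝ) = Real.sqrt 1 by simp]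
  apply Real.sqrt_le_sqrt
  unfold lamt
  nlinarith [ht.1, ht.2]

/-- Lemma 2.10: for lifts of the hyperbolic element `τ_{∞,0}(λ₁)` and the parabolic
element `π_α(λ₂)`, if `λ₂α ≤ (λ₁+1)/(λ₁−1)` then `Φ(1) ∈ (0, π]`, and if
`λ₂α > (λ₁+1)/(λ₁−1)` then `Φ(1) ∈ (π, 2π)`. -/
theorem lemma210 (l1 l2 α : ℝ) (hl1 : 1 < l1) (hl2 : 0 < l2) (hα : 0 < α)
    (Φ : ℝ → ℝ) (hΦc : ContinuousOn Φ (Set.Icc 0 1)) (hΦ0 : Φ 0 = 0)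
    (hΦ : ∀ t ∈ Set.Icc (0 : ℝ) 1,
      Complex.exp (Complex.I * (Φ t : ℂ))
        = (wfun l1 l2 α t / (‖wfun l1 l2 α t‖ : ℂ)) ^ 2) :
    (l2 * α ≤ (l1 + 1) / (l1 - 1) → Φ 1 ∈ Set.Ioc 0 Real.pi) ∧
    ((l1 + 1) / (l1 - 1) < l2 * α → Φ 1 ∈ Set.Ioo Real.pi (2 * Real.pi)) := by
  have pi_pos := Real.pi_pos
  -- basic positivity of sqrt
  have hs1 : ∀ t ∈ Set.Icc (0:ℝ) 1, 1 ≤ Real.sqrt (lamt l1 t) :=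
    fun t ht => sqrt_lamt_ge_one hl1 ht
  have hspos : ∀ t ∈ Set.Icc (0:ℝ) 1, 0 < Real.sqrt (lamt l1 t) :=
    fun t ht => lt_of_lt_of_le one_pos (hs1 t ht)
  -- imaginary part positive on (0,1]
  have him : ∀ t ∈ Set.Ioc (0:ℝ) 1, 0 < (wfun l1 l2 α t).im := by
    intro t ht
    rw [wfun_im]
    have h1 := hspos t ⟨ht.1.le, ht.2⟩
    have h2 : 0 < (Real.sqrt (lamt l1 t))⁻¹ := inv_pos.mpr h1
    have : 0 < Real.sqrt (lamt l1 t) * α^2 + (Real.sqrt (lamt l1 t))⁻¹ := by positivity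
    exact mul_pos (mul_pos ht.1 hl2) this
  -- w(0) = 2
  have hw0 : wfun l1 l2 α 0 = 2 := by
    apply Complex.ext
    · rw [wfun_re]; norm_num [lamt]
    · rw [wfun_im]; simp
  -- slit-plane membership
  have hslit : ∀ t ∈ Set.Icc (0:ℝ) 1, wfun l1 l2 α t ∈ Complex.slitPlane := by
    intro t ht
    rcases eq_or_lt_of_le ht.1 with h0 | h0
    · rw [← h0, hw0]
      exact Complex.mem_slitPlane_iff.mpr (Or.inl (by norm_num))
    · exact Complex.mem_slitPlane_iff.mpr (Or.inr (ne_of_gt (him t ⟨h0, ht.2⟩)))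
  have hne : ∀ t ∈ Set.Icc (0:ℝ) 1, wfun l1 l2 α t ≠ 0 := by
    intro t ht h
    exact Complex.zero_notMem_slitPlane (h ▸ hslit t ht)
  -- continuity of w
  have hsc : ContinuousOn (fun t => Real.sqrt (lamt l1 t)) (Set.Icc 0 1) :=
    (Real.continuous_sqrt.comp (by unfold lamt; continuity)).continuousOn
  have hsic : ContinuousOn (fun t => (Real.sqrt (lamt l1 t))⁻¹) (Set.Icc 0 1) :=
    hsc.inv₀ (fun t ht => ne_of_gt (hspos t ht))
  have hwc : ContinuousOn (fun t => wfun l1 l2 α t) (Set.Icc 0 1) := by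
    have hre : ContinuousOn (fun t => (matM l1 l2 α t 0 0 + matM l1 l2 α t 1 1 : ℝ))
        (Set.Icc 0 1) := by
      simp only [sum_entries]
      exact (hsc.mul (by fun_prop)).add (hsic.mul (by fun_prop))
    have him' : ContinuousOn (fun t => (matM l1 l2 α t 0 1 - matM l1 l2 α t 1 0 : ℝ))
        (Set.Icc 0 1) := by
      simp only [diff_entries]
      exact (by fun_prop : ContinuousOn (fun t : ℝ => t * l2) _).mul
        ((hsc.mul continuousOn_const).add hsic)
    unfold wfun
    exact ((Complex.continuous_ofReal.comp_continuousOn hre)).add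
      (continuousOn_const.mul (Complex.continuous_ofReal.comp_continuousOn him'))
  -- continuity of arg ∘ w
  have hargc : ContinuousOn (fun t => (wfun l1 l2 α t).arg) (Set.Icc 0 1) := by
    intro t ht
    exact (Complex.continuousAt_arg (hslit t ht)).comp_continuousWithinAt (hwc t ht)
  -- Φ t - 2 arg (w t) ∈ 2πℤ
  set g : ℝ → ℝ := fun t => Φ t - 2 * (wfun l1 l2 α t).arg with hg_def
  have hgc : ContinuousOn g (Set.Icc 0 1) := hΦc.sub (continuousOn_const.mul hargc)
  have hgval : ∀ t ∈ Set.Icc (0:ℝ) 1, ∃ n : ℤ, g t = n * (2 * Real.pi) := by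
    intro t ht
    have hexp := hΦ t ht
    have habs : (‖wfun l1 l2 α t‖ : ℂ) = (‖wfun l1 l2 α t‖ : ℝ) := by
      rfl
    have hq : wfun l1 l2 α t / (‖wfun l1 l2 α t‖ : ℂ)
        = Complex.exp ((wfun l1 l2 α t).arg * Complex.I) := by
      rw [habs]
      rw [eq_comm, eq_div_iff]
      · rw [mul_comm]; exact Complex.norm_mul_exp_arg_mul_I _
      · simpa using (norm_ne_zero_iff.mpr (hne t ht))
    rw [hq, ← Complex.exp_nat_mul] at hexp
    rw [Complex.exp_eq_exp_iff_exists_int] at hexp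
    obtain ⟨n, hn⟩ := hexp
    refine ⟨n, ?_⟩
    have := congrArg Complex.im hn
    simp [Complex.mul_im, Complex.mul_re] at this
    simp only [hg_def]
    push_cast at this ⊢
    linarith
  -- g 0 = 0
  have hg0 : g 0 = 0 := by
    simp only [hg_def, hΦ0, hw0]
    norm_num [Complex.arg_ofReal_of_nonneg]
  -- g 1 = 0 via IVT
  have h01 : (1:ℝ) ∈ Set.Icc (0:ℝ) 1 := by norm_num
  have h00 : (0:ℝ) ∈ Set.Icc (0:ℝ) 1 := by norm_num
  obtain ⟨k, hk⟩ := hgval 1 h01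
  have hk0 : k = 0 := by
    by_contra hkne
    have key : ∀ c : ℝ, c ∈ Set.Icc (g 0) (g 1) ∪ Set.Icc (g 1) (g 0) →
        ∃ t ∈ Set.Icc (0:ℝ) 1, g t = c := by
      intro c hc
      rcases hc with hc | hc
      · obtain ⟨t, ht, hgt⟩ := intermediate_value_Icc (by norm_num : (0:ℝ) ≤ 1) hgc hc
        exact ⟨t, ht, hgt⟩
      · obtain ⟨t, ht, hgt⟩ := intermediate_value_Icc' (by norm_num : (0:ℝ) ≤ 1) hgc hc
        exact ⟨t, ht, hgt⟩
    rcases lt_or_gt_of_ne hkne with hneg | hpos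
    · -- k ≤ -1, so g 1 ≤ -2π, and -π ∈ [g 1, g 0]
      have hk1 : (k:ℝ) ≤ -1 := by exact_mod_cast (by omega : k ≤ -1)
      have hle : g 1 ≤ -(2*Real.pi) := by rw [hk]; nlinarith
      obtain ⟨t, ht, hgt⟩ := key (-Real.pi) (Or.inr ⟨by linarith, by rw [hg0]; linarith⟩)
      obtain ⟨m, hm⟩ := hgval t ht
      rw [hm] at hgt
      have : (2 * m : ℝ) = -1 := by
        have hz : Real.pi * (2*(m:ℝ)+1) = 0 := by linear_combination hgt
        rcases mul_eq_zero.mp hz with h | h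
        · linarith
        · linarith
      have : (2 * m : ℤ) = -1 := by exact_mod_cast this
      omega
    · have hk1 : (1:ℝ) ≤ (k:ℝ) := by exact_mod_cast hpos
      have hle : 2*Real.pi ≤ g 1 := by rw [hk]; nlinarith
      obtain ⟨t, ht, hgt⟩ := key Real.pi (Or.inl ⟨by rw [hg0]; linarith, by linarith⟩)
      obtain ⟨m, hm⟩ := hgval t ht
      rw [hm] at hgt
      have : (2 * m : ℝ) = 1 := by
        have hz : Real.pi * (2*(m:ℝ)-1) = 0 := by linear_combination hgt
        rcases mul_eq_zero.mp hz with h | h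
        · linarith
        · linarith
      have : (2 * m : ℤ) = 1 := by exact_mod_cast this
      omega
  have hΦ1 : Φ 1 = 2 * (wfun l1 l2 α 1).arg := by
    have := hk
    rw [hk0] at this
    simp only [hg_def] at this
    push_cast at this
    linarith
  -- arg bounds at t = 1
  have him1 : 0 < (wfun l1 l2 α 1).im := him 1 ⟨one_pos, le_refl 1⟩
  have harg_pos : 0 < (wfun l1 l2 α 1).arg := by
    rcases lt_or_eq_of_le (Complex.arg_nonneg_iff.mpr him1.le) with h | h
    · exact h
    · exfalso
      have := (Complex.arg_eq_zero_iff.mp h.symm).2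
      linarith
  have harg_lt_pi : (wfun l1 l2 α 1).arg < Real.pi :=
    Complex.arg_lt_pi_iff.mpr (Or.inr (ne_of_gt him1))
  -- the real part at t = 1
  have hlam1 : lamt l1 1 = l1 := by unfold lamt; ring
  have hs : Real.sqrt l1 > 0 := Real.sqrt_pos.mpr (by linarith)
  have hs2 : Real.sqrt l1 ^ 2 = l1 := Real.sq_sqrt (by linarith)
  have hre1 : (wfun l1 l2 α 1).re
      = (Real.sqrt l1 / l1) * ((l1 + 1) - l2 * α * (l1 - 1)) := by
    rw [wfun_re, hlam1]
    have hl1pos : (0:ℝ) < l1 := by linarith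
    field_simp
    linear_combination ((1 - l2*α)*l1 - (l1+1 - l2*α*(l1-1))) * hs2
  have hl1m : (0:ℝ) < l1 - 1 := by linarith
  constructor
  · intro hcond
    have hcond' : l2 * α * (l1 - 1) ≤ l1 + 1 := by
      rw [le_div_iff₀ hl1m] at hcond
      linarith
    have hre_nonneg : 0 ≤ (wfun l1 l2 α 1).re := by
      rw [hre1]
      have : (0:ℝ) < Real.sqrt l1 / l1 := by positivity
      nlinarith
    have harg_le : (wfun l1 l2 α 1).arg ≤ Real.pi / 2 :=
      Complex.arg_le_pi_div_two_iff.mpr (Or.inl hre_nonneg)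
    exact ⟨by rw [hΦ1]; linarith, by rw [hΦ1]; linarith⟩
  · intro hcond
    have hcond' : l1 + 1 < l2 * α * (l1 - 1) := by
      rw [div_lt_iff₀ hl1m] at hcond
      linarith
    have hre_neg : (wfun l1 l2 α 1).re < 0 := by
      rw [hre1]
      have h1 : (0:ℝ) < Real.sqrt l1 / l1 := by positivity
      nlinarith
    have harg_gt : Real.pi / 2 < (wfun l1 l2 α 1).arg := by
      by_contra h
      push_neg at h
      rcases Complex.arg_le_pi_div_two_iff.mp h with h' | h'
      · linarith
      · linarith
    exact ⟨by rw [hΦ1]; linarith, by rw [hΦ1]; linarith⟩
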